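/- Let n ≥ 2 and 0 ≤ m < n. The function f(t,x) defined for t > 0, x > 0 by f(t,x) = (1/Γ((n-m)/2)) ∫₀^∞ (x + 2tw)^(1-n/2) w^((n-m)/2-1) e^(-w) dw (n > 2) or by the analogous formula with -log(x + 2tw) and w^(-m/2) (n = 2) satisfies the PDE f_t(t,x) + m f_x(t,x) + 2x f_xx(t,x) = 0 on (0,∞)². -/

import Mathlib

open MeasureTheory Real Set Filter

namespace PDEAuxAll



lemma integrableOn_gint {p : ℝ} (hp : -1 < p) :
    IntegrableOn (fun w : ℝ => w ^ p * Real.exp (-w)) (Set.Ioi (0:ℝ)) := by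
  have h := Real.GammaIntegral_convergent (show 0 < p + 1 by linarith)
  have he : (fun x : ℝ => Real.exp (-x) * x ^ (p + 1 - 1)) = fun w : ℝ => w ^ p * Real.exp (-w) := by
    funext w; rw [add_sub_cancel_right]; ring
  rwa [he] at h

lemma contOn_J {t x : ℝ} (q p : ℝ) (ht : 0 ≤ t) (hx : 0 < x) :
    ContinuousOn (fun w : ℝ => (x + 2*t*w) ^ q * w ^ p * Real.exp (-w)) (Set.Ioi 0) := by
  intro w hw
  have hw' : (0:ℝ) < w := hw
  have hb : 0 < x + 2*t*w := by nlinarith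
  have cb : ContinuousAt (fun w : ℝ => x + 2*t*w) w :=
    (continuous_const.add (continuous_const.mul continuous_id)).continuousAt
  have c1 : ContinuousAt (fun w : ℝ => (x + 2*t*w) ^ q) w :=
    cb.rpow_const (Or.inl hb.ne')
  have c2 : ContinuousAt (fun w : ℝ => w ^ p) w :=
    continuousAt_id.rpow_const (Or.inl hw'.ne')
  have c3 : ContinuousAt (fun w : ℝ => Real.exp (-w)) w :=
    (Real.continuous_exp.comp continuous_neg).continuousAt
  exact ((c1.mul c2).mul c3).continuousWithinAt

lemma aesm_J {t x : ℝ} (q p : ℝ) (ht : 0 ≤ t) (hx : 0 < x) :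
    AEStronglyMeasurable (fun w : ℝ => (x + 2*t*w) ^ q * w ^ p * Real.exp (-w))
      (volume.restrict (Set.Ioi 0)) :=
  (contOn_J q p ht hx).aestronglyMeasurable measurableSet_Ioi

lemma integrableOn_J {t x q p : ℝ} (ht : 0 ≤ t) (hx : 0 < x) (hq : q ≤ 0) (hp : -1 < p) :
    IntegrableOn (fun w : ℝ => (x + 2*t*w) ^ q * w ^ p * Real.exp (-w)) (Set.Ioi 0) := by
  apply Integrable.mono' ((integrableOn_gint hp).const_mul (x ^ q)) (aesm_J q p ht hx)
  filter_upwards [ae_restrict_mem measurableSet_Ioi] with w hw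
  have hw' : (0:ℝ) < w := hw
  have hb : 0 < x + 2*t*w := by nlinarith
  have h1 : (x + 2*t*w) ^ q ≤ x ^ q :=
    Real.rpow_le_rpow_of_nonpos hx (by nlinarith) hq
  rw [Real.norm_eq_abs, abs_of_nonneg (by positivity)]
  calc (x + 2*t*w) ^ q * w ^ p * Real.exp (-w)
      = (x + 2*t*w) ^ q * (w ^ p * Real.exp (-w)) := by ring
    _ ≤ x ^ q * (w ^ p * Real.exp (-w)) := by gcongr
    _ = x ^ q * (w ^ p * Real.exp (-w)) := rfl



noncomputable def J (t x q p : ℝ) : ℝ :=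
  ∫ w in Set.Ioi (0:ℝ), (x + 2*t*w) ^ q * w ^ p * Real.exp (-w)

lemma hasDerivAt_affine {c d u : ℝ} : HasDerivAt (fun s : ℝ => c + 2*s*d) (2*d) u := by
  have h : (fun s : ℝ => c + 2*s*d) = fun s => c + (2*d)*s := by funext s; ring
  rw [h]
  simpa using ((hasDerivAt_id u).const_mul (2*d)).const_add c

lemma hasDerivAt_J_t {t x q p : ℝ} (ht : 0 < t) (hx : 0 < x) (hq : q ≤ 0) (hp : -1 < p) :
    HasDerivAt (fun s => J s x q p) (2*q * J t x (q-1) (p+1)) t := by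
  have key := hasDerivAt_integral_of_dominated_loc_of_deriv_le
    (μ := volume.restrict (Set.Ioi 0)) (x₀ := t) (s := Metric.ball t (t/2))
    (F := fun s w => (x + 2*s*w) ^ q * w ^ p * Real.exp (-w))
    (F' := fun s w => (2*q) * ((x + 2*s*w) ^ (q-1) * w ^ (p+1) * Real.exp (-w)))
    (bound := fun w => (2*(abs q)*x^(q-1)) * (w ^ (p+1) * Real.exp (-w)))
    (Metric.ball_mem_nhds t (half_pos ht))
    (by filter_upwards [eventually_gt_nhds ht] with s hs using aesm_J q p hs.le hx)
    (integrableOn_J ht.le hx hq hp)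
    ((aesm_J (q-1) (p+1) ht.le hx).const_mul _)
    (by
      filter_upwards [ae_restrict_mem measurableSet_Ioi] with w hw
      intro s hs
      have hw' : (0:ℝ) < w := hw
      have hs' : t/2 < s := by
        have := abs_sub_lt_iff.1 (by simpa [Real.dist_eq] using hs)
        linarith [this.2]
      have hb : 0 < x + 2*s*w := by nlinarith
      have h1 : (x + 2*s*w) ^ (q-1) ≤ x ^ (q-1) :=
        Real.rpow_le_rpow_of_nonpos hx (by nlinarith) (by linarith)
      rw [Real.norm_eq_abs, abs_mul, abs_of_nonneg
        (show (0:ℝ) ≤ (x + 2*s*w) ^ (q-1) * w ^ (p+1) * Real.exp (-w) by positivity)]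
      calc (abs (2*q)) * ((x + 2*s*w) ^ (q-1) * w ^ (p+1) * Real.exp (-w))
          = 2*(abs q) * ((x + 2*s*w) ^ (q-1) * (w ^ (p+1) * Real.exp (-w))) := by
            rw [abs_mul, abs_two]; ring
        _ ≤ 2*(abs q) * (x ^ (q-1) * (w ^ (p+1) * Real.exp (-w))) := by gcongr
        _ = (2*(abs q)*x^(q-1)) * (w ^ (p+1) * Real.exp (-w)) := by ring)
    (((integrableOn_gint (by linarith : (-1:ℝ) < p+1)).const_mul _))
    (by
      filter_upwards [ae_restrict_mem measurableSet_Ioi] with w hw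
      intro s hs
      have hw' : (0:ℝ) < w := hw
      have hs' : t/2 < s := by
        have := abs_sub_lt_iff.1 (by simpa [Real.dist_eq] using hs)
        linarith [this.2]
      have hb : 0 < x + 2*s*w := by nlinarith
      have h0 : HasDerivAt (fun u : ℝ => x + 2*u*w) (2*w) s := hasDerivAt_affine
      have h1 := (h0.rpow_const (p := q) (Or.inl hb.ne')).mul_const (w ^ p * Real.exp (-w))
      have hfun : (fun u : ℝ => (x + 2*u*w) ^ q * (w ^ p * Real.exp (-w)))
          = fun u => (x + 2*u*w) ^ q * w ^ p * Real.exp (-w) := by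
        funext u; ring
      rw [hfun] at h1
      refine h1.congr_deriv ?_
      rw [Real.rpow_add_one hw'.ne' p]
      ring)
  have h2 := key.2
  rw [MeasureTheory.integral_const_mul] at h2
  exact h2




lemma hasDerivAt_J_x {t x q p : ℝ} (ht : 0 < t) (hx : 0 < x) (hq : q ≤ 0) (hp : -1 < p) :
    HasDerivAt (fun y => J t y q p) (q * J t x (q-1) p) x := by
  have key := hasDerivAt_integral_of_dominated_loc_of_deriv_le
    (μ := volume.restrict (Set.Ioi 0)) (x₀ := x) (s := Metric.ball x (x/2))
    (F := fun y w => (y + 2*t*w) ^ q * w ^ p * Real.exp (-w))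
    (F' := fun y w => q * ((y + 2*t*w) ^ (q-1) * w ^ p * Real.exp (-w)))
    (bound := fun w => ((abs q)*(x/2)^(q-1)) * (w ^ p * Real.exp (-w)))
    (Metric.ball_mem_nhds x (half_pos hx))
    (by filter_upwards [eventually_gt_nhds hx] with y hy using aesm_J q p ht.le hy)
    (integrableOn_J ht.le hx hq hp)
    ((aesm_J (q-1) p ht.le hx).const_mul _)
    (by
      filter_upwards [ae_restrict_mem measurableSet_Ioi] with w hw
      intro y hy
      have hw' : (0:ℝ) < w := hw
      have hy' : x/2 < y := by
        have := abs_sub_lt_iff.1 (by simpa [Real.dist_eq] using hy)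
        linarith [this.2]
      have hb : 0 < y + 2*t*w := by nlinarith
      have h1 : (y + 2*t*w) ^ (q-1) ≤ (x/2) ^ (q-1) :=
        Real.rpow_le_rpow_of_nonpos (half_pos hx) (by nlinarith) (by linarith)
      rw [Real.norm_eq_abs, abs_mul, abs_of_nonneg
        (show (0:ℝ) ≤ (y + 2*t*w) ^ (q-1) * w ^ p * Real.exp (-w) by positivity)]
      calc (abs q) * ((y + 2*t*w) ^ (q-1) * w ^ p * Real.exp (-w))
          = (abs q) * ((y + 2*t*w) ^ (q-1) * (w ^ p * Real.exp (-w))) := by ring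
        _ ≤ (abs q) * ((x/2) ^ (q-1) * (w ^ p * Real.exp (-w))) := by gcongr
        _ = ((abs q)*(x/2)^(q-1)) * (w ^ p * Real.exp (-w)) := by ring)
    (((integrableOn_gint hp).const_mul _))
    (by
      filter_upwards [ae_restrict_mem measurableSet_Ioi] with w hw
      intro y hy
      have hw' : (0:ℝ) < w := hw
      have hy' : x/2 < y := by
        have := abs_sub_lt_iff.1 (by simpa [Real.dist_eq] using hy)
        linarith [this.2]
      have hb : 0 < y + 2*t*w := by nlinarith
      have h0 : HasDerivAt (fun u : ℝ => u + 2*t*w) 1 y := by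
        simpa using (hasDerivAt_id y).add_const (2*t*w)
      have h1 := (h0.rpow_const (p := q) (Or.inl hb.ne')).mul_const (w ^ p * Real.exp (-w))
      have hfun : (fun u : ℝ => (u + 2*t*w) ^ q * (w ^ p * Real.exp (-w)))
          = fun u => (u + 2*t*w) ^ q * w ^ p * Real.exp (-w) := by
        funext u; ring
      rw [hfun] at h1
      refine h1.congr_deriv ?_
      ring)
  have h2 := key.2
  rw [MeasureTheory.integral_const_mul] at h2
  exact h2




noncomputable def L (t x p : ℝ) : ℝ :=
  ∫ w in Set.Ioi (0:ℝ), -Real.log (x + 2*t*w) * w ^ p * Real.exp (-w)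

lemma contOn_L {t x : ℝ} (p : ℝ) (ht : 0 ≤ t) (hx : 0 < x) :
    ContinuousOn (fun w : ℝ => -Real.log (x + 2*t*w) * w ^ p * Real.exp (-w)) (Set.Ioi 0) := by
  intro w hw
  have hw' : (0:ℝ) < w := hw
  have hb : 0 < x + 2*t*w := by nlinarith
  have cb : ContinuousAt (fun w : ℝ => x + 2*t*w) w :=
    (continuous_const.add (continuous_const.mul continuous_id)).continuousAt
  have c1 : ContinuousAt (fun w : ℝ => -Real.log (x + 2*t*w)) w :=
    (cb.log hb.ne').neg
  have c2 : ContinuousAt (fun w : ℝ => w ^ p) w :=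
    continuousAt_id.rpow_const (Or.inl hw'.ne')
  have c3 : ContinuousAt (fun w : ℝ => Real.exp (-w)) w :=
    (Real.continuous_exp.comp continuous_neg).continuousAt
  exact ((c1.mul c2).mul c3).continuousWithinAt

lemma aesm_L {t x : ℝ} (p : ℝ) (ht : 0 ≤ t) (hx : 0 < x) :
    AEStronglyMeasurable (fun w : ℝ => -Real.log (x + 2*t*w) * w ^ p * Real.exp (-w))
      (volume.restrict (Set.Ioi 0)) :=
  (contOn_L p ht hx).aestronglyMeasurable measurableSet_Ioi

lemma log_bound {t x w : ℝ} (ht : 0 ≤ t) (hx : 0 < x) (hw : 0 < w) :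
    |Real.log (x + 2*t*w)| ≤ |Real.log x| + 2*t*w/x := by
  have hb : 0 < x + 2*t*w := by nlinarith
  have h1 : Real.log x ≤ Real.log (x + 2*t*w) :=
    Real.log_le_log hx (by nlinarith)
  have h2 : Real.log (x + 2*t*w) - Real.log x ≤ 2*t*w/x := by
    rw [← Real.log_div hb.ne' hx.ne']
    have h3 := Real.log_le_sub_one_of_pos (show 0 < (x + 2*t*w)/x by positivity)
    have h4 : (x + 2*t*w)/x - 1 = 2*t*w/x := by field_simp; ring
    linarith
  have h5 : 0 ≤ 2*t*w/x := by positivity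
  rw [abs_le]
  constructor
  · have := neg_abs_le (Real.log x); linarith
  · have := le_abs_self (Real.log x); linarith

lemma integrableOn_L {t x p : ℝ} (ht : 0 ≤ t) (hx : 0 < x) (hp : -1 < p) :
    IntegrableOn (fun w : ℝ => -Real.log (x + 2*t*w) * w ^ p * Real.exp (-w)) (Set.Ioi 0) := by
  apply Integrable.mono'
    (g := fun w => |Real.log x| * (w ^ p * Real.exp (-w)) + (2*t/x) * (w ^ (p+1) * Real.exp (-w)))
    (((integrableOn_gint hp).const_mul _).add
      ((integrableOn_gint (show (-1:ℝ) < p+1 by linarith)).const_mul _))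
    (aesm_L p ht hx)
  filter_upwards [ae_restrict_mem measurableSet_Ioi] with w hw
  have hw' : (0:ℝ) < w := hw
  have hb : 0 < x + 2*t*w := by nlinarith
  have hlog := log_bound ht hx hw'
  rw [Real.norm_eq_abs, abs_mul, abs_mul, abs_neg, abs_of_nonneg (show (0:ℝ) ≤ w ^ p by positivity),
    abs_of_nonneg (Real.exp_nonneg _)]
  calc |Real.log (x + 2*t*w)| * w ^ p * Real.exp (-w)
      ≤ (|Real.log x| + 2*t*w/x) * w ^ p * Real.exp (-w) := by gcongr
    _ = |Real.log x| * (w ^ p * Real.exp (-w)) + (2*t/x) * (w ^ p * w * Real.exp (-w)) := by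
        field_simp
    _ = |Real.log x| * (w ^ p * Real.exp (-w)) + (2*t/x) * (w ^ (p+1) * Real.exp (-w)) := by
        rw [Real.rpow_add_one hw'.ne' p]

lemma hasDerivAt_L_t {t x p : ℝ} (ht : 0 < t) (hx : 0 < x) (hp : -1 < p) :
    HasDerivAt (fun s => L s x p) (-2 * J t x (-1) (p+1)) t := by
  have key := hasDerivAt_integral_of_dominated_loc_of_deriv_le
    (μ := volume.restrict (Set.Ioi 0)) (x₀ := t) (s := Metric.ball t (t/2))
    (F := fun s w => -Real.log (x + 2*s*w) * w ^ p * Real.exp (-w))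
    (F' := fun s w => (-2) * ((x + 2*s*w) ^ (-1:ℝ) * w ^ (p+1) * Real.exp (-w)))
    (bound := fun w => (2/t) * (w ^ p * Real.exp (-w)))
    (Metric.ball_mem_nhds t (half_pos ht))
    (by filter_upwards [eventually_gt_nhds ht] with s hs using aesm_L p hs.le hx)
    (integrableOn_L ht.le hx hp)
    ((aesm_J (-1) (p+1) ht.le hx).const_mul _)
    (by
      filter_upwards [ae_restrict_mem measurableSet_Ioi] with w hw
      intro s hs
      have hw' : (0:ℝ) < w := hw
      have hs' : t/2 < s := by
        have := abs_sub_lt_iff.1 (by simpa [Real.dist_eq] using hs)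
        linarith [this.2]
      have hb : 0 < x + 2*s*w := by nlinarith
      have hkey : w / (x + 2*s*w) ≤ 1/t := by
        rw [div_le_div_iff₀ hb ht]
        nlinarith
      rw [Real.norm_eq_abs, abs_mul, abs_of_nonneg
        (show (0:ℝ) ≤ (x + 2*s*w) ^ (-1:ℝ) * w ^ (p+1) * Real.exp (-w) by positivity)]
      have habs : |(-2:ℝ)| = 2 := by norm_num
      rw [habs, Real.rpow_neg_one, Real.rpow_add_one hw'.ne' p]
      calc 2 * ((x + 2*s*w)⁻¹ * (w ^ p * w) * Real.exp (-w))
          = 2 * ((w / (x + 2*s*w)) * (w ^ p * Real.exp (-w))) := by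
            field_simp
        _ ≤ 2 * ((1/t) * (w ^ p * Real.exp (-w))) := by gcongr
        _ = (2/t) * (w ^ p * Real.exp (-w)) := by ring)
    (((integrableOn_gint hp).const_mul _))
    (by
      filter_upwards [ae_restrict_mem measurableSet_Ioi] with w hw
      intro s hs
      have hw' : (0:ℝ) < w := hw
      have hs' : t/2 < s := by
        have := abs_sub_lt_iff.1 (by simpa [Real.dist_eq] using hs)
        linarith [this.2]
      have hb : 0 < x + 2*s*w := by nlinarith
      have h0 : HasDerivAt (fun u : ℝ => x + 2*u*w) (2*w) s := hasDerivAt_affine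
      have h1 := ((h0.log hb.ne').neg).mul_const (w ^ p * Real.exp (-w))
      have hfun : (fun u : ℝ => -Real.log (x + 2*u*w) * (w ^ p * Real.exp (-w)))
          = fun u => -Real.log (x + 2*u*w) * w ^ p * Real.exp (-w) := by
        funext u; ring
      simp only [Pi.neg_apply] at h1
      rw [hfun] at h1
      refine h1.congr_deriv ?_
      rw [Real.rpow_neg_one, Real.rpow_add_one hw'.ne' p, div_eq_mul_inv]
      ring)
  have h2 := key.2
  rw [MeasureTheory.integral_const_mul] at h2
  exact h2

lemma hasDerivAt_L_x {t x p : ℝ} (ht : 0 < t) (hx : 0 < x) (hp : -1 < p) :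
    HasDerivAt (fun y => L t y p) (-J t x (-1) p) x := by
  have key := hasDerivAt_integral_of_dominated_loc_of_deriv_le
    (μ := volume.restrict (Set.Ioi 0)) (x₀ := x) (s := Metric.ball x (x/2))
    (F := fun y w => -Real.log (y + 2*t*w) * w ^ p * Real.exp (-w))
    (F' := fun y w => (-1) * ((y + 2*t*w) ^ (-1:ℝ) * w ^ p * Real.exp (-w)))
    (bound := fun w => (2/x) * (w ^ p * Real.exp (-w)))
    (Metric.ball_mem_nhds x (half_pos hx))
    (by filter_upwards [eventually_gt_nhds hx] with y hy using aesm_L p ht.le hy)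
    (integrableOn_L ht.le hx hp)
    ((aesm_J (-1) p ht.le hx).const_mul _)
    (by
      filter_upwards [ae_restrict_mem measurableSet_Ioi] with w hw
      intro y hy
      have hw' : (0:ℝ) < w := hw
      have hy' : x/2 < y := by
        have := abs_sub_lt_iff.1 (by simpa [Real.dist_eq] using hy)
        linarith [this.2]
      have hb : 0 < y + 2*t*w := by nlinarith
      have hkey : (y + 2*t*w)⁻¹ ≤ 2/x := by
        have h6 : (y + 2*t*w)⁻¹ ≤ (x/2)⁻¹ := by
          apply inv_anti₀ (half_pos hx) (by nlinarith)
        have h7 : (x/2)⁻¹ = 2/x := by field_simp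
        linarith
      rw [Real.norm_eq_abs, abs_mul, abs_of_nonneg
        (show (0:ℝ) ≤ (y + 2*t*w) ^ (-1:ℝ) * w ^ p * Real.exp (-w) by positivity)]
      have habs : |(-1:ℝ)| = 1 := by norm_num
      rw [habs, Real.rpow_neg_one, one_mul]
      calc (y + 2*t*w)⁻¹ * w ^ p * Real.exp (-w)
          = (y + 2*t*w)⁻¹ * (w ^ p * Real.exp (-w)) := by ring
        _ ≤ (2/x) * (w ^ p * Real.exp (-w)) := by gcongr
        _ = (2/x) * (w ^ p * Real.exp (-w)) := rfl)
    (((integrableOn_gint hp).const_mul _))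
    (by
      filter_upwards [ae_restrict_mem measurableSet_Ioi] with w hw
      intro y hy
      have hw' : (0:ℝ) < w := hw
      have hy' : x/2 < y := by
        have := abs_sub_lt_iff.1 (by simpa [Real.dist_eq] using hy)
        linarith [this.2]
      have hb : 0 < y + 2*t*w := by nlinarith
      have h0 : HasDerivAt (fun u : ℝ => u + 2*t*w) 1 y := by
        simpa using (hasDerivAt_id y).add_const (2*t*w)
      have h1 := ((h0.log hb.ne').neg).mul_const (w ^ p * Real.exp (-w))
      have hfun : (fun u : ℝ => -Real.log (u + 2*t*w) * (w ^ p * Real.exp (-w)))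
          = fun u => -Real.log (u + 2*t*w) * w ^ p * Real.exp (-w) := by
        funext u; ring
      simp only [Pi.neg_apply] at h1
      rw [hfun] at h1
      refine h1.congr_deriv ?_
      rw [Real.rpow_neg_one, one_div]
      ring)
  have h2 := key.2
  rw [MeasureTheory.integral_const_mul] at h2
  rw [neg_one_mul] at h2
  exact h2




lemma hasDerivAt_affine' {c d u : ℝ} : HasDerivAt (fun w : ℝ => c + 2*d*w) (2*d) u := by
  simpa using ((hasDerivAt_id u).const_mul (2*d)).const_add c

lemma integral_zero_of_antideriv {P C : ℝ → ℝ} (hP0 : ContinuousWithinAt P (Set.Ici 0) 0)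
    (hP00 : P 0 = 0) (hderiv : ∀ w ∈ Set.Ioi (0:ℝ), HasDerivAt P (C w) w)
    (hint : IntegrableOn C (Set.Ioi 0)) (htop : Tendsto P atTop (nhds 0)) :
    ∫ w in Set.Ioi (0:ℝ), C w = 0 := by
  rw [integral_Ioi_of_hasDerivAt_of_tendsto hP0 hderiv hint htop, hP00, sub_zero]

/-- antiderivative used in both cases -/
noncomputable def P (c t x r p : ℝ) (w : ℝ) : ℝ :=
  c * (w ^ (p+1) * ((x + 2*t*w) ^ r * Real.exp (-w)))

lemma P_cont0 {c t x r p : ℝ} (ht : 0 ≤ t) (hx : 0 < x) (hp : -1 < p) :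
    ContinuousWithinAt (P c t x r p) (Set.Ici 0) 0 := by
  apply ContinuousAt.continuousWithinAt
  have c1 : ContinuousAt (fun w : ℝ => w ^ (p+1)) 0 :=
    continuousAt_id.rpow_const (Or.inr (by linarith))
  have cb : ContinuousAt (fun w : ℝ => x + 2*t*w) 0 :=
    (continuous_const.add (continuous_const.mul continuous_id)).continuousAt
  have hb : (0:ℝ) < x + 2*t*0 := by nlinarith
  have c2 : ContinuousAt (fun w : ℝ => (x + 2*t*w) ^ r) 0 :=
    cb.rpow_const (Or.inl hb.ne')
  have c3 : ContinuousAt (fun w : ℝ => Real.exp (-w)) 0 :=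
    (Real.continuous_exp.comp continuous_neg).continuousAt
  exact (continuousAt_const.mul (c1.mul (c2.mul c3)))

lemma P_zero {c t x r p : ℝ} (hp : -1 < p) : P c t x r p 0 = 0 := by
  unfold P
  rw [Real.zero_rpow (by linarith : p + 1 ≠ 0)]
  ring

lemma P_tendsto {c t x r p : ℝ} (ht : 0 ≤ t) (hx : 0 < x) (hr : r ≤ 0) :
    Tendsto (P c t x r p) atTop (nhds 0) := by
  have h := tendsto_rpow_mul_exp_neg_mul_atTop_nhds_zero (p+1) 1 one_pos
  have h2 := h.const_mul (|c| * x ^ r)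
  rw [mul_zero] at h2
  apply squeeze_zero_norm' ?_ h2
  filter_upwards [eventually_gt_atTop 0] with w hw
  have hb : 0 < x + 2*t*w := by nlinarith
  have h1 : (x + 2*t*w) ^ r ≤ x ^ r :=
    Real.rpow_le_rpow_of_nonpos hx (by nlinarith) hr
  unfold P
  rw [Real.norm_eq_abs, abs_mul, abs_of_nonneg
    (show (0:ℝ) ≤ w ^ (p+1) * ((x + 2*t*w) ^ r * Real.exp (-w)) by positivity)]
  calc |c| * (w ^ (p+1) * ((x + 2*t*w) ^ r * Real.exp (-w)))
      ≤ |c| * (w ^ (p+1) * (x ^ r * Real.exp (-w))) := by gcongr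
    _ = |c| * x ^ r * (w ^ (p+1) * Real.exp (-1 * w)) := by rw [neg_one_mul]; ring

lemma combo1 {t x q p m : ℝ} (ht : 0 < t) (hx : 0 < x) (hq : q ≤ 0) (hp : -1 < p)
    (hm : m + 2*p + 2*q = 0) :
    2*q * J t x (q-1) (p+1) + m * (q * J t x (q-1) p) + 2*x*(q*((q-1) * J t x (q-2) p)) = 0 := by
  have h1 := integrableOn_J (q := q-1) (p := p+1) ht.le hx (by linarith) (by linarith)
  have h2 := integrableOn_J (q := q-1) (p := p) ht.le hx (by linarith) hp
  have h3 := integrableOn_J (q := q-2) (p := p) ht.le hx (by linarith) hp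
  have key : ∫ w in Set.Ioi (0:ℝ),
      (2*q * ((x + 2*t*w) ^ (q-1) * w ^ (p+1) * Real.exp (-w))
        + (m*q) * ((x + 2*t*w) ^ (q-1) * w ^ p * Real.exp (-w))
        + (2*x*q*(q-1)) * ((x + 2*t*w) ^ (q-2) * w ^ p * Real.exp (-w))) = 0 := by
    apply integral_zero_of_antideriv (P := P (-2*q) t x (q-1) p)
      (P_cont0 ht.le hx hp) (P_zero hp) ?_ ?_ (P_tendsto ht.le hx (by linarith))
    · intro w hw
      have hw' : (0:ℝ) < w := hw
      have hb : 0 < x + 2*t*w := by nlinarith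
      have hA : HasDerivAt (fun w : ℝ => w ^ (p+1)) ((p+1) * w ^ p) w := by
        have := Real.hasDerivAt_rpow_const (x := w) (p := p+1) (Or.inl hw'.ne')
        simpa [add_sub_cancel_right] using this
      have hB : HasDerivAt (fun w : ℝ => (x + 2*t*w) ^ (q-1))
          ((q-1) * (x + 2*t*w) ^ (q-2) * (2*t)) w := by
        have := (hasDerivAt_affine' (c := x) (d := t) (u := w)).rpow_const
          (p := q-1) (Or.inl hb.ne')
        simpa [show q - 1 - 1 = q - 2 by ring, mul_comm, mul_assoc, mul_left_comm] using this
      have hC : HasDerivAt (fun w : ℝ => Real.exp (-w)) (-Real.exp (-w)) w := by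
        simpa using ((hasDerivAt_id w).neg).exp
      have hBC := hB.mul hC
      have hP := (hA.mul hBC).const_mul (-2*q)
      simp only [Pi.mul_apply] at hP
      refine hP.congr_deriv ?_
      have hb1 : (x + 2*t*w) ^ (q-1) = (x + 2*t*w) ^ (q-2) * (x + 2*t*w) := by
        rw [show q-1 = (q-2)+1 by ring, Real.rpow_add_one hb.ne']
      have hw1 : w ^ (p+1) = w ^ p * w := Real.rpow_add_one hw'.ne' p
      rw [hb1, hw1]
      have hm' : m = -2*p - 2*q := by linarith
      rw [hm']
      ring
    · apply Integrable.add
      apply Integrable.add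
      · exact h1.const_mul _
      · exact h2.const_mul _
      · exact h3.const_mul _
  have e1 : ∫ w in Set.Ioi (0:ℝ),
      (2*q * ((x + 2*t*w) ^ (q-1) * w ^ (p+1) * Real.exp (-w))
        + (m*q) * ((x + 2*t*w) ^ (q-1) * w ^ p * Real.exp (-w))
        + (2*x*q*(q-1)) * ((x + 2*t*w) ^ (q-2) * w ^ p * Real.exp (-w)))
      = 2*q * J t x (q-1) (p+1) + (m*q) * J t x (q-1) p + (2*x*q*(q-1)) * J t x (q-2) p := by
    rw [integral_add (by exact (h1.const_mul _).add (h2.const_mul _)) (h3.const_mul _),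
      integral_add (h1.const_mul _) (h2.const_mul _),
      MeasureTheory.integral_const_mul, MeasureTheory.integral_const_mul,
      MeasureTheory.integral_const_mul]
    rfl
  rw [e1] at key
  linarith [key]

lemma combo2 {t x p m : ℝ} (ht : 0 < t) (hx : 0 < x) (hp : -1 < p) (hm : m + 2*p = 0) :
    (-2) * J t x (-1) (p+1) + m * (-J t x (-1) p) + 2*x*(J t x (-2) p) = 0 := by
  have h1 := integrableOn_J (q := (-1:ℝ)) (p := p+1) ht.le hx (by norm_num) (by linarith)
  have h2 := integrableOn_J (q := (-1:ℝ)) (p := p) ht.le hx (by norm_num) hp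
  have h3 := integrableOn_J (q := (-2:ℝ)) (p := p) ht.le hx (by norm_num) hp
  have key : ∫ w in Set.Ioi (0:ℝ),
      ((-2) * ((x + 2*t*w) ^ (-1:ℝ) * w ^ (p+1) * Real.exp (-w))
        + (-m) * ((x + 2*t*w) ^ (-1:ℝ) * w ^ p * Real.exp (-w))
        + (2*x) * ((x + 2*t*w) ^ (-2:ℝ) * w ^ p * Real.exp (-w))) = 0 := by
    apply integral_zero_of_antideriv (P := P 2 t x (-1) p)
      (P_cont0 ht.le hx hp) (P_zero hp) ?_ ?_ (P_tendsto ht.le hx (by norm_num))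
    · intro w hw
      have hw' : (0:ℝ) < w := hw
      have hb : 0 < x + 2*t*w := by nlinarith
      have hA : HasDerivAt (fun w : ℝ => w ^ (p+1)) ((p+1) * w ^ p) w := by
        have := Real.hasDerivAt_rpow_const (x := w) (p := p+1) (Or.inl hw'.ne')
        simpa [add_sub_cancel_right] using this
      have hB : HasDerivAt (fun w : ℝ => (x + 2*t*w) ^ (-1:ℝ))
          ((-1) * (x + 2*t*w) ^ (-2:ℝ) * (2*t)) w := by
        have := (hasDerivAt_affine' (c := x) (d := t) (u := w)).rpow_const
          (p := (-1:ℝ)) (Or.inl hb.ne')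
        simpa [show (-1:ℝ) - 1 = -2 by ring, mul_comm, mul_assoc, mul_left_comm] using this
      have hC : HasDerivAt (fun w : ℝ => Real.exp (-w)) (-Real.exp (-w)) w := by
        simpa using ((hasDerivAt_id w).neg).exp
      have hBC := hB.mul hC
      have hP := (hA.mul hBC).const_mul (2:ℝ)
      simp only [Pi.mul_apply] at hP
      refine hP.congr_deriv ?_
      have hb1 : (x + 2*t*w) ^ (-1:ℝ) = (x + 2*t*w) ^ (-2:ℝ) * (x + 2*t*w) := by
        rw [show (-1:ℝ) = (-2)+1 by ring, Real.rpow_add_one hb.ne']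
      have hw1 : w ^ (p+1) = w ^ p * w := Real.rpow_add_one hw'.ne' p
      rw [hb1, hw1]
      have hm' : m = -2*p := by linarith
      rw [hm']
      ring
    · apply Integrable.add
      apply Integrable.add
      · exact h1.const_mul _
      · exact h2.const_mul _
      · exact h3.const_mul _
  have e1 : ∫ w in Set.Ioi (0:ℝ),
      ((-2) * ((x + 2*t*w) ^ (-1:ℝ) * w ^ (p+1) * Real.exp (-w))
        + (-m) * ((x + 2*t*w) ^ (-1:ℝ) * w ^ p * Real.exp (-w))
        + (2*x) * ((x + 2*t*w) ^ (-2:ℝ) * w ^ p * Real.exp (-w)))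
      = (-2) * J t x (-1) (p+1) + (-m) * J t x (-1) p + (2*x) * J t x (-2) p := by
    rw [integral_add (by exact (h1.const_mul _).add (h2.const_mul _)) (h3.const_mul _),
      integral_add (h1.const_mul _) (h2.const_mul _),
      MeasureTheory.integral_const_mul, MeasureTheory.integral_const_mul,
      MeasureTheory.integral_const_mul]
    rfl
  rw [e1] at key
  linarith [key]

end PDEAuxAll

open PDEAuxAll


theorem f_satisfies_pde (n m : ℝ) (hn : 2 ≤ n) (hm0 : 0 ≤ m) (hmn : m < n)
    (f : ℝ → ℝ → ℝ)
    (hf : ∀ t x : ℝ, 0 < t → 0 < x → f t x =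
      if 2 < n then
        (1 / Real.Gamma ((n - m) / 2)) *
          ∫ w in Set.Ioi (0:ℝ),
            (x + 2 * t * w) ^ (1 - n / 2) * w ^ ((n - m) / 2 - 1) * Real.exp (-w)
      else
        (1 / Real.Gamma ((n - m) / 2)) *
          ∫ w in Set.Ioi (0:ℝ),
            -Real.log (x + 2 * t * w) * w ^ (-m / 2) * Real.exp (-w)) :
    ∀ t x : ℝ, 0 < t → 0 < x →
      deriv (fun s => f s x) t + m * deriv (fun y => f t y) x +
        2 * x * deriv (deriv (fun y => f t y)) x = 0 := by
  intro t x ht hx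
  set Γi := 1 / Real.Gamma ((n - m) / 2) with hΓ
  by_cases hcase : 2 < n
  · -- case n > 2
    have hq : 1 - n/2 ≤ 0 := by linarith
    have hp : -1 < (n-m)/2 - 1 := by linarith
    have hfeq : ∀ s y : ℝ, 0 < s → 0 < y → f s y = Γi * J s y (1 - n/2) ((n-m)/2 - 1) := by
      intro s y hs hy
      rw [hf s y hs hy, if_pos hcase]
      rfl
    have hdt : deriv (fun s => f s x) t
        = Γi * (2*(1 - n/2) * J t x (1 - n/2 - 1) ((n-m)/2 - 1 + 1)) := by
      have hev : (fun s => f s x) =ᶠ[nhds t] fun s => Γi * J s x (1 - n/2) ((n-m)/2 - 1) := by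
        filter_upwards [eventually_gt_nhds ht] with s hs using hfeq s x hs hx
      rw [hev.deriv_eq]
      exact ((hasDerivAt_J_t ht hx hq hp).const_mul Γi).deriv
    have hdy : ∀ y : ℝ, 0 < y → deriv (fun y' => f t y') y
        = Γi * ((1 - n/2) * J t y (1 - n/2 - 1) ((n-m)/2 - 1)) := by
      intro y hy
      have hev : (fun y' => f t y') =ᶠ[nhds y] fun y' => Γi * J t y' (1 - n/2) ((n-m)/2 - 1) := by
        filter_upwards [eventually_gt_nhds hy] with z hz using hfeq t z ht hz
      rw [hev.deriv_eq]
      exact ((hasDerivAt_J_x ht hy hq hp).const_mul Γi).deriv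
    have hd2 : deriv (deriv (fun y' => f t y')) x
        = Γi * ((1 - n/2) * ((1 - n/2 - 1) * J t x (1 - n/2 - 1 - 1) ((n-m)/2 - 1))) := by
      have hev2 : deriv (fun y' => f t y')
          =ᶠ[nhds x] fun y => Γi * ((1 - n/2) * J t y (1 - n/2 - 1) ((n-m)/2 - 1)) := by
        filter_upwards [eventually_gt_nhds hx] with y hy using hdy y hy
      rw [hev2.deriv_eq]
      exact (((hasDerivAt_J_x ht hx (by linarith) hp).const_mul (1 - n/2)).const_mul Γi).deriv
    rw [hdt, hdy x hx, hd2]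
    have hcombo := combo1 (m := m) ht hx hq hp (by ring)
    have e2 : 1 - n/2 - 1 - 1 = 1 - n/2 - 2 := by ring
    rw [e2]
    linear_combination Γi * hcombo
  · -- case n = 2
    have hn2 : n = 2 := le_antisymm (not_lt.1 hcase) hn
    have hp : -1 < -m/2 := by rw [hn2] at hmn; linarith
    have hfeq : ∀ s y : ℝ, 0 < s → 0 < y → f s y = Γi * L s y (-m/2) := by
      intro s y hs hy
      rw [hf s y hs hy, if_neg hcase]
      rfl
    have hdt : deriv (fun s => f s x) t = Γi * (-2 * J t x (-1) (-m/2 + 1)) := by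
      have hev : (fun s => f s x) =ᶠ[nhds t] fun s => Γi * L s x (-m/2) := by
        filter_upwards [eventually_gt_nhds ht] with s hs using hfeq s x hs hx
      rw [hev.deriv_eq]
      exact ((hasDerivAt_L_t ht hx hp).const_mul Γi).deriv
    have hdy : ∀ y : ℝ, 0 < y → deriv (fun y' => f t y') y
        = Γi * (-J t y (-1) (-m/2)) := by
      intro y hy
      have hev : (fun y' => f t y') =ᶠ[nhds y] fun y' => Γi * L t y' (-m/2) := by
        filter_upwards [eventually_gt_nhds hy] with z hz using hfeq t z ht hz
      rw [hev.deriv_eq]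
      exact ((hasDerivAt_L_x ht hy hp).const_mul Γi).deriv
    have hd2 : deriv (deriv (fun y' => f t y')) x
        = Γi * (-((-1) * J t x (-1-1) (-m/2))) := by
      have hev2 : deriv (fun y' => f t y')
          =ᶠ[nhds x] fun y => Γi * (-J t y (-1) (-m/2)) := by
        filter_upwards [eventually_gt_nhds hx] with y hy using hdy y hy
      rw [hev2.deriv_eq]
      exact (((hasDerivAt_J_x ht hx (by norm_num) hp).neg).const_mul Γi).deriv
    rw [hdt, hdy x hx, hd2]
    have hcombo := combo2 (m := m) ht hx hp (by ring)
    have e2 : (-1:ℝ)-1 = -2 := by ring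
    have e3 : -m/2 + 1 = -m/2 + 1 := rfl
    rw [e2]
    linear_combination Γi * hcombo
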